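/- Any optimal solution x of the Nash bargaining program (maximize Π_{i∈A} u_i·x_i over fractional perfect matchings) is 2-approximately envy-free: for all agents i, i', u_i·x_i ≥ (1/2) u_i·x_{i'}. -/
import Mathlib


def isPM {n : ℕ} (x : Fin n → Fin n → ℝ) : Prop :=
  (∀ i j, 0 ≤ x i j) ∧ (∀ i, ∑ j, x i j = 1) ∧ (∀ j, ∑ i, x i j = 1)

def util {n : ℕ} (u x : Fin n → Fin n → ℝ) (i : Fin n) : ℝ := ∑ j, u i j * x i j

/-- any maximizer of the Nash bargaining program over fractional
perfect matchings is 2-approximately envy-free. -/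
theorem nash_two_envy_free {n : ℕ} (u x : Fin n → Fin n → ℝ)
    (hu : ∀ i j, 0 ≤ u i j) (hx : isPM x)
    (hpos : ∀ i, 0 < util u x i)
    (hmax : ∀ y, isPM y → ∏ i, util u y i ≤ ∏ i, util u x i) :
    ∀ i i' : Fin n, (1 / 2) * (∑ j, u i j * x i' j) ≤ util u x i := by
  intro i i'
  by_cases hii : i = i'
  · rw [← hii]
    have h := hpos i
    simp only [util] at h ⊢
    linarith
  · by_contra hcon
    push_neg at hcon
    set a := util u x i with ha
    set b := ∑ j, u i j * x i' j with hb
    set c := util u x i' with hc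
    set d := ∑ j, u i' j * x i j with hd
    have hapos : 0 < a := hpos i
    have hcpos : 0 < c := hpos i'
    have hdnn : 0 ≤ d := Finset.sum_nonneg fun j _ =>
      mul_nonneg (hu i' j) (hx.1 i j)
    have hba : 2 * a < b := by linarith
    have hbpos : 0 < b := by linarith
    set ε : ℝ := (b - 2 * a) / (2 * (b - a)) with hε
    have hba' : 0 < b - a := by linarith
    have hεpos : 0 < ε := div_pos (by linarith) (by linarith)
    have hεlt : ε < 1 := by
      rw [hε, div_lt_one (by linarith)]; linarith
    have hεle : ε ≤ 1 := le_of_lt hεlt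
    have h1ε : 0 ≤ 1 - ε := by linarith
    set y : Fin n → Fin n → ℝ := fun k j =>
      if k = i then (1 - ε) * x i j + ε * x i' j
      else if k = i' then (1 - ε) * x i' j + ε * x i j
      else x k j with hy
    have hyPM : isPM y := by
      refine ⟨?_, ?_, ?_⟩
      · intro k j
        simp only [hy]
        split_ifs
        · exact add_nonneg (mul_nonneg h1ε (hx.1 i j)) (mul_nonneg hεpos.le (hx.1 i' j))
        · exact add_nonneg (mul_nonneg h1ε (hx.1 i' j)) (mul_nonneg hεpos.le (hx.1 i j))
        · exact hx.1 k j
      · intro k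
        by_cases hk : k = i
        · simp only [hy, if_pos hk]
          rw [Finset.sum_add_distrib, ← Finset.mul_sum, ← Finset.mul_sum,
            hx.2.1 i, hx.2.1 i']
          ring
        · by_cases hk' : k = i'
          · simp only [hy, if_neg hk, if_pos hk']
            rw [Finset.sum_add_distrib, ← Finset.mul_sum, ← Finset.mul_sum,
              hx.2.1 i, hx.2.1 i']
            ring
          · simp only [hy, if_neg hk, if_neg hk']
            exact hx.2.1 k
      · intro j
        have key : ∀ k, y k j = x k j +
            (if k = i then ε * (x i' j - x i j)
             else if k = i' then ε * (x i j - x i' j) else 0) := by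
          intro k
          simp only [hy]
          split_ifs with h1 h2
          · rw [h1]; ring
          · rw [h2]; ring
          · ring
        calc ∑ k, y k j = ∑ k, (x k j +
            (if k = i then ε * (x i' j - x i j)
             else if k = i' then ε * (x i j - x i' j) else 0)) :=
              Finset.sum_congr rfl fun k _ => key k
          _ = (∑ k, x k j) + ∑ k, (if k = i then ε * (x i' j - x i j)
             else if k = i' then ε * (x i j - x i' j) else 0) :=
              Finset.sum_add_distrib
          _ = 1 := by
              rw [hx.2.2 j]
              have hsub : ({i, i'} : Finset (Fin n)) ⊆ Finset.univ :=
                Finset.subset_univ _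
              rw [← Finset.sum_subset hsub (by
                intro k _ hk
                simp only [Finset.mem_insert, Finset.mem_singleton, not_or] at hk
                rw [if_neg hk.1, if_neg hk.2])]
              rw [Finset.sum_pair hii]
              rw [if_pos rfl, if_neg (Ne.symm hii), if_pos rfl]
              ring
    -- utilities of y
    have hyi : util u y i = (1 - ε) * a + ε * b := by
      have h1 : util u y i = ∑ j, ((1 - ε) * (u i j * x i j) + ε * (u i j * x i' j)) := by
        simp only [util, hy, if_pos rfl]
        exact Finset.sum_congr rfl fun j _ => by ring
      rw [h1, Finset.sum_add_distrib, ← Finset.mul_sum, ← Finset.mul_sum, ha, hb]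
      simp only [util]
    have hyi' : util u y i' = (1 - ε) * c + ε * d := by
      have h1 : util u y i' = ∑ j, ((1 - ε) * (u i' j * x i' j) + ε * (u i' j * x i j)) := by
        simp only [util, hy, if_neg (Ne.symm hii), if_pos rfl, if_true, ite_true]
        exact Finset.sum_congr rfl fun j _ => by ring
      rw [h1, Finset.sum_add_distrib, ← Finset.mul_sum, ← Finset.mul_sum, hc, hd]
      simp only [util]
    have hyk : ∀ k, k ≠ i → k ≠ i' → util u y k = util u x k := by
      intro k h1 h2
      simp only [util, hy, if_neg h1, if_neg h2]
    -- split products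
    have hi'mem : i' ∈ Finset.univ.erase i :=
      Finset.mem_erase.2 ⟨Ne.symm hii, Finset.mem_univ _⟩
    set T : ℝ := ∏ k ∈ (Finset.univ.erase i).erase i', util u x k with hT
    have hTpos : 0 < T :=
      Finset.prod_pos fun k _ => hpos k
    have hprodx : ∏ k, util u x k = a * (c * T) := by
      rw [← Finset.mul_prod_erase Finset.univ (util u x) (Finset.mem_univ i),
        ← Finset.mul_prod_erase _ (util u x) hi'mem]
    have hprody : ∏ k, util u y k = ((1 - ε) * a + ε * b) * (((1 - ε) * c + ε * d) * T) := by
      rw [← Finset.mul_prod_erase Finset.univ (util u y) (Finset.mem_univ i),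
        ← Finset.mul_prod_erase _ (util u y) hi'mem, hyi, hyi']
      congr 2
      refine Finset.prod_congr rfl fun k hk => ?_
      simp only [Finset.mem_erase] at hk
      exact hyk k hk.2.1 hk.1
    have hkey : a * c < ((1 - ε) * a + ε * b) * ((1 - ε) * c + ε * d) := by
      have hεval : ε * (2 * (b - a)) = b - 2 * a := by
        rw [hε, div_mul_cancel₀]
        linarith
      nlinarith [mul_pos hεpos hcpos, mul_nonneg hεpos.le hdnn,
        mul_nonneg (mul_nonneg h1ε hεpos.le) hdnn,
        mul_pos (mul_pos hεpos hcpos) (sub_pos.2 hba)]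
    have := hmax y hyPM
    rw [hprody, hprodx] at this
    nlinarith [mul_lt_mul_of_pos_right hkey hTpos]
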